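/- For τ > 0 and σ > 1, the sequence M_p = p^{τ p^σ} (with M_0 = 1) is logarithmically convex: (M_p)^2 ≤ M_{p−1} · M_{p+1} for all p ≥ 1. -/

import Mathlib

open Real Set

private lemma hd1 {σ : ℝ} {x : ℝ} (hx : 0 < x) :
    HasDerivAt (fun x : ℝ => x ^ σ * Real.log x)
      (σ * x ^ (σ - 1) * Real.log x + x ^ (σ - 1)) x := by
  have h := (Real.hasDerivAt_rpow_const (p := σ) (Or.inl hx.ne')).mul
    (Real.hasDerivAt_log hx.ne')
  refine h.congr_deriv ?_
  rw [Real.rpow_sub hx, Real.rpow_one]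
  ring

private lemma hd2 {σ : ℝ} {x : ℝ} (hx : 0 < x) :
    HasDerivAt (fun x : ℝ => σ * x ^ (σ - 1) * Real.log x + x ^ (σ - 1))
      (σ * (σ - 1) * x ^ (σ - 2) * Real.log x + σ * x ^ (σ - 2)
        + (σ - 1) * x ^ (σ - 2)) x := by
  have h1 := ((Real.hasDerivAt_rpow_const (p := σ - 1) (Or.inl hx.ne')).const_mul σ).mul
    (Real.hasDerivAt_log hx.ne')
  have h2 := Real.hasDerivAt_rpow_const (p := σ - 1) (x := x) (Or.inl hx.ne')
  have h := h1.add h2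
  refine h.congr_deriv ?_
  have e1 : σ - 1 - 1 = σ - 2 := by ring
  have e2 : x ^ (σ - 2) = x ^ (σ - 1) * x⁻¹ := by
    rw [← Real.rpow_neg_one x, ← Real.rpow_add hx, show σ - 1 + -1 = σ - 2 by ring]
  rw [e1, e2]
  ring

private lemma convex_f {σ : ℝ} (hσ : 1 < σ) :
    ConvexOn ℝ (Set.Ici (1 : ℝ)) (fun x : ℝ => x ^ σ * Real.log x) := by
  have hint : interior (Set.Ici (1 : ℝ)) = Set.Ioi 1 := interior_Ici
  set g : ℝ → ℝ := fun x => σ * x ^ (σ - 1) * Real.log x + x ^ (σ - 1) with hg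
  have hderiv : ∀ x : ℝ, 0 < x →
      deriv (fun x : ℝ => x ^ σ * Real.log x) x = g x := fun x hx => (hd1 hx).deriv
  have hEq : ∀ x : ℝ, 1 < x →
      deriv (fun x : ℝ => x ^ σ * Real.log x) =ᶠ[nhds x] g := by
    intro x hx
    filter_upwards [eventually_gt_nhds (lt_trans zero_lt_one hx)] with y hy
    exact hderiv y hy
  apply convexOn_of_deriv2_nonneg (convex_Ici 1)
  · intro x hx
    exact ((hd1 (lt_of_lt_of_le zero_lt_one hx)).differentiableAt).continuousAt.continuousWithinAt
  · rw [hint]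
    intro x hx
    exact ((hd1 (lt_trans zero_lt_one hx)).differentiableAt).differentiableWithinAt
  · rw [hint]
    intro x hx
    have := ((hd2 (lt_trans zero_lt_one hx)).differentiableAt).congr_of_eventuallyEq (hEq x hx)
    exact this.differentiableWithinAt
  · rw [hint]
    intro x hx
    have hx0 : 0 < x := lt_trans zero_lt_one hx
    have : deriv^[2] (fun x : ℝ => x ^ σ * Real.log x) x = deriv g x := by
      simp only [Function.iterate_succ, Function.iterate_zero, Function.comp_apply, id]
      exact (hEq x hx).deriv_eq
    rw [this, (hd2 hx0).deriv]
    have hlog : 0 ≤ Real.log x := Real.log_nonneg hx.le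
    have hpow : 0 ≤ x ^ (σ - 2) := Real.rpow_nonneg hx0.le _
    have h1 : (0:ℝ) ≤ σ - 1 := by linarith
    positivity

/-- For τ > 0 and σ > 1, the sequence M_p = p^{τ p^σ}, M_0 = 1, is log-convex:
    (M_p)² ≤ M_{p−1}·M_{p+1} for all p ≥ 1. -/
theorem stmt_4 (τ σ : ℝ) (hτ : 0 < τ) (hσ : 1 < σ) (M : ℕ → ℝ)
    (hM0 : M 0 = 1)
    (hM : ∀ p : ℕ, 1 ≤ p → M p = (p : ℝ) ^ (τ * (p : ℝ) ^ σ)) :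
    ∀ p : ℕ, 1 ≤ p → (M p) ^ 2 ≤ M (p - 1) * M (p + 1) := by
  intro p hp
  rcases eq_or_lt_of_le hp with h1 | h2
  · -- p = 1
    have hp1 : p = 1 := h1.symm
    subst hp1
    have hM1 : M 1 = 1 := by rw [hM 1 le_rfl]; simp
    have hM2 : (1:ℝ) ≤ M 2 := by
      rw [hM 2 (by norm_num)]
      exact Real.one_le_rpow (by norm_num) (by positivity)
    simp only [Nat.sub_self, hM0, hM1, one_mul, one_pow]
    exact hM2
  · -- p ≥ 2
    have hp2 : 2 ≤ p := h2
    set x : ℝ := (p : ℝ) with hx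
    have hx2 : (2:ℝ) ≤ x := by rw [hx]; exact_mod_cast hp2
    have hx0 : 0 < x := by linarith
    have hcast1 : ((p - 1 : ℕ) : ℝ) = x - 1 := by
      have : (1:ℕ) ≤ p := hp
      push_cast [Nat.cast_sub this]
      ring
    have hcast2 : ((p + 1 : ℕ) : ℝ) = x + 1 := by push_cast; ring
    have hMp := hM p hp
    have hMm := hM (p - 1) (by omega)
    have hMp1 := hM (p + 1) (by omega)
    rw [hcast1] at hMm
    rw [hcast2] at hMp1
    have ha : (1:ℝ) ≤ x - 1 := by linarith
    have hb : (1:ℝ) ≤ x + 1 := by linarith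
    have hconv := (convex_f hσ).2 (Set.mem_Ici.mpr ha) (Set.mem_Ici.mpr hb)
      (by norm_num : (0:ℝ) ≤ 1/2) (by norm_num : (0:ℝ) ≤ 1/2) (by norm_num)
    simp only [smul_eq_mul] at hconv
    have hmid : (1/2 : ℝ) * (x - 1) + (1/2 : ℝ) * (x + 1) = x := by ring
    rw [hmid] at hconv
    -- hconv : x^σ * log x ≤ 1/2 * ((x-1)^σ * log (x-1)) + 1/2 * ((x+1)^σ * log (x+1))
    have ha0 : (0:ℝ) < x - 1 := by linarith
    have hb0 : (0:ℝ) < x + 1 := by linarith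
    rw [hMp, hMm, hMp1, Real.rpow_def_of_pos hx0, Real.rpow_def_of_pos ha0,
      Real.rpow_def_of_pos hb0, ← Real.exp_add, sq, ← Real.exp_add]
    apply Real.exp_le_exp.mpr
    nlinarith [hconv]
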